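/- Legendre duality between KL divergence and free energy: for a probability measure P on a measurable space X, a bounded measurable cost C : X → ℝ, and λ > 0, the free energy F(P,C) := -λ log ∫ exp(-C(x)/λ) dP(x) satisfies F(P,C) = inf_Q { ∫ C dQ + λ D(Q‖P) }, where the infimum is over probability measures Q absolutely continuous with respect to P, and D(Q‖P) = ∫ log(dQ/dP) dQ is the KL divergence. Moreover the infimum is attained by the Gibbs measure Q*(B) = ∫_B exp(-C/λ) dP / ∫_X exp(-C/λ) dP. -/
import Mathlib


open MeasureTheory

/-- Gibbs' inequality: the KL divergence integral is nonnegative. -/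
lemma my_gibbs_nonneg {X : Type*} [MeasurableSpace X] {Q P : Measure X}
    [IsProbabilityMeasure Q] [IsProbabilityMeasure P]
    (hQP : Q ≪ P) (hint : Integrable (llr Q P) Q) :
    0 ≤ ∫ x, llr Q P x ∂Q := by
  have hexp : (fun x => Real.exp (-llr Q P x)) =ᵐ[Q] fun x => (P.rnDeriv Q x).toReal :=
    exp_neg_llr hQP
  have hint2 : Integrable (fun x => Real.exp (-llr Q P x)) Q :=
    (Measure.integrable_toReal_rnDeriv).congr hexp.symm
  have hjen : Real.exp (∫ x, -llr Q P x ∂Q) ≤ ∫ x, Real.exp (-llr Q P x) ∂Q :=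
    convexOn_exp.map_integral_le Real.continuous_exp.continuousOn isClosed_univ
      (Filter.Eventually.of_forall fun _ => Set.mem_univ _) hint.neg hint2
  have hle1 : ∫ x, Real.exp (-llr Q P x) ∂Q ≤ 1 := by
    rw [integral_congr_ae hexp]
    have h := Measure.setIntegral_toReal_rnDeriv_le (μ := P) (ν := Q) (s := Set.univ)
      (by simp)
    simpa using h
  rw [integral_neg] at hjen
  have h1 : Real.exp (-∫ x, llr Q P x ∂Q) ≤ 1 := hjen.trans hle1
  have h2 : -∫ x, llr Q P x ∂Q ≤ 0 := Real.exp_le_one_iff.mp h1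
  linarith

/-- Integrability of bounded measurable functions w.r.t. finite measures. -/
lemma my_integrable_of_bdd {X : Type*} [MeasurableSpace X] {μ : Measure X}
    [IsFiniteMeasure μ] {f : X → ℝ} (hf : Measurable f) {M : ℝ} (hM : ∀ x, |f x| ≤ M) :
    Integrable f μ :=
  (integrable_const M).mono' hf.aestronglyMeasurable
    (Filter.Eventually.of_forall fun x => by simpa using hM x)

theorem legendre_duality_kl_free_energy
    {X : Type*} [MeasurableSpace X] (P : Measure X) [IsProbabilityMeasure P]
    (C : X → ℝ) (hCmeas : Measurable C) (hCbdd : ∃ M : ℝ, ∀ x, |C x| ≤ M)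
    (lam : ℝ) (hlam : 0 < lam)
    (Z : ℝ) (hZ : Z = ∫ x, Real.exp (-C x / lam) ∂P)
    (F : ℝ) (hF : F = -lam * Real.log Z)
    (Qstar : Measure X)
    (hQstar : Qstar = P.withDensity fun x => ENNReal.ofReal (Real.exp (-C x / lam) / Z)) :
    (∀ Q : Measure X, IsProbabilityMeasure Q → Q ≪ P → Integrable (llr Q P) Q →
        F ≤ ∫ x, C x ∂Q + lam * ∫ x, llr Q P x ∂Q) ∧
    IsProbabilityMeasure Qstar ∧ Qstar ≪ P ∧
    F = ∫ x, C x ∂Qstar + lam * ∫ x, llr Qstar P x ∂Qstar ∧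
    ∀ B : Set X, MeasurableSet B →
      Qstar B = ENNReal.ofReal ((∫ x in B, Real.exp (-C x / lam) ∂P) / Z) := by
  obtain ⟨M, hM⟩ := hCbdd
  set f : X → ℝ := fun x => -C x / lam with hf_def
  have hfmeas : Measurable f := (hCmeas.neg).div_const lam
  have hfbdd : ∀ x, |f x| ≤ M / lam := fun x => by
    rw [hf_def, abs_div, abs_neg, abs_of_pos hlam]
    gcongr
    exact hM x
  -- integrability of exp ∘ f under P
  have hexp_int : Integrable (fun x => Real.exp (f x)) P := by
    refine my_integrable_of_bdd (hfmeas.exp) (M := Real.exp (M / lam)) fun x => ?_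
    rw [abs_of_pos (Real.exp_pos _)]
    exact Real.exp_le_exp.mpr ((abs_le.mp (hfbdd x)).2)
  have hZ' : Z = ∫ x, Real.exp (f x) ∂P := hZ
  have hZpos : 0 < Z := by rw [hZ']; exact integral_exp_pos hexp_int
  -- identify Qstar with the tilted measure
  have hQt : Qstar = P.tilted f := by
    rw [hQstar, Measure.tilted, ← hZ']
  have hQprob : IsProbabilityMeasure Qstar := by
    rw [hQt]; exact isProbabilityMeasure_tilted hexp_int
  have hQac : Qstar ≪ P := by rw [hQt]; exact tilted_absolutelyContinuous P f
  have hPQ : P ≪ Qstar := by rw [hQt]; exact absolutelyContinuous_tilted hexp_int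
  refine ⟨?_, hQprob, hQac, ?_, ?_⟩
  · -- lower bound
    intro Q hQprob' hQP hQint
    have hCintQ : Integrable C Q := my_integrable_of_bdd hCmeas hM
    have hfintQ : Integrable f Q := (hCintQ.neg).div_const lam
    haveI : IsProbabilityMeasure (P.tilted f) := isProbabilityMeasure_tilted hexp_int
    have hQtilted : Q ≪ P.tilted f := hQP.trans (absolutelyContinuous_tilted hexp_int)
    have hintt : Integrable (llr Q (P.tilted f)) Q :=
      integrable_llr_tilted_right hQP hfintQ hQint hexp_int
    have hnonneg : 0 ≤ ∫ x, llr Q (P.tilted f) x ∂Q := my_gibbs_nonneg hQtilted hintt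
    have heq : ∫ x, llr Q (P.tilted f) x ∂Q
        = ∫ x, llr Q P x ∂Q - ∫ x, f x ∂Q + Real.log (∫ x, Real.exp (f x) ∂P) :=
      integral_llr_tilted_right hQP hfintQ hexp_int hQint
    have hfQ : ∫ x, f x ∂Q = -(∫ x, C x ∂Q) / lam := by
      rw [hf_def]
      simp [integral_div, integral_neg]
    rw [heq, hfQ, ← hZ'] at hnonneg
    have h := mul_le_mul_of_nonneg_left hnonneg hlam.le
    rw [hF]
    have hlamne : lam ≠ 0 := hlam.ne'
    field_simp at h ⊢
    nlinarith [h]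
  · -- value at the Gibbs measure
    have hCintQ : Integrable C Qstar := my_integrable_of_bdd hCmeas hM
    have hllr : llr Qstar P =ᵐ[P] fun x => f x - Real.log Z := by
      have h1 : llr (P.tilted f) P =ᵐ[P]
          fun x => f x - Real.log (∫ z, Real.exp (f z) ∂P) + llr P P x :=
        llr_tilted_left Measure.AbsolutelyContinuous.rfl hexp_int hfmeas.aemeasurable
      have h2 : llr P P =ᵐ[P] fun _ => (0 : ℝ) := by
        filter_upwards [Measure.rnDeriv_self P] with x hx
        simp [llr, hx]
      rw [hQt]
      filter_upwards [h1, h2] with x hx1 hx2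
      rw [hx1, hx2, ← hZ']
      ring
    have hllrQ : llr Qstar P =ᵐ[Qstar] fun x => f x - Real.log Z := hQac.ae_le hllr
    have hint_llr : ∫ x, llr Qstar P x ∂Qstar = ∫ x, f x - Real.log Z ∂Qstar :=
      integral_congr_ae hllrQ
    have hfintQ : Integrable f Qstar := (hCintQ.neg).div_const lam
    have hval : ∫ x, f x - Real.log Z ∂Qstar
        = -(∫ x, C x ∂Qstar) / lam - Real.log Z := by
      rw [integral_sub hfintQ (integrable_const _)]
      simp [hf_def, integral_div, integral_neg]
    rw [hF, hint_llr, hval]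
    field_simp
    ring
  · -- formula for Qstar on measurable sets
    intro B _
    rw [hQt, tilted_apply_eq_ofReal_integral, ← hZ']
    congr 1
    rw [integral_div]
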